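/- When γ_{10} = 0, the qutrit ReMAD channel is not antidegradable in any parameter region where it has a two-dimensional noiseless subspace: the matrix unit |0⟩⟨1| lies in the kernel of the complementary channel Φ̃_Γ^{(γ_{10}=0)} but not in the kernel of Φ_Γ^{(γ_{10}=0)}; hence ker Φ̃_Γ ⊄ ker Φ_Γ. -/

import Mathlib

open Matrix
open scoped BigOperators
/-- First qutrit ReMAD Kraus operator `K^{(0)} = diag(1, √(1-γ₁₀), √(1-γ₂₁-γ₂₀))`. -/
noncomputable def K0 (g10 g21 g20 : ℝ) : Matrix (Fin 3) (Fin 3) ℂ :=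
  !![(1 : ℂ), 0, 0;
     0, ((Real.sqrt (1 - g10) : ℝ) : ℂ), 0;
     0, 0, ((Real.sqrt (1 - g21 - g20) : ℝ) : ℂ)]

/-- Second qutrit ReMAD Kraus operator `K^{(1)} = √γ₁₀ |0⟩⟨1| + √γ₂₁ |1⟩⟨2|`. -/
noncomputable def K1 (g10 g21 : ℝ) : Matrix (Fin 3) (Fin 3) ℂ :=
  !![(0 : ℂ), ((Real.sqrt g10 : ℝ) : ℂ), 0;
     0, 0, ((Real.sqrt g21 : ℝ) : ℂ);
     0, 0, 0]

/-- Third qutrit ReMAD Kraus operator `K^{(2)} = √γ₂₀ |0⟩⟨2|`. -/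
noncomputable def K2 (g20 : ℝ) : Matrix (Fin 3) (Fin 3) ℂ :=
  !![(0 : ℂ), 0, ((Real.sqrt g20 : ℝ) : ℂ);
     0, 0, 0;
     0, 0, 0]

/-- The qutrit ReMAD channel `Φ_Γ(ρ) = Σ_{i=0}^{2} K^{(i)} ρ K^{(i)†}`. -/
noncomputable def Phi (g10 g21 g20 : ℝ) (ρ : Matrix (Fin 3) (Fin 3) ℂ) :
    Matrix (Fin 3) (Fin 3) ℂ :=
  K0 g10 g21 g20 * ρ * (K0 g10 g21 g20)ᴴ + K1 g10 g21 * ρ * (K1 g10 g21)ᴴ +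
    K2 g20 * ρ * (K2 g20)ᴴ

/-- The complementary channel of the qutrit ReMAD channel,
`Φ̃_Γ(ρ)_{e,e'} = Tr(K^{(e)} ρ K^{(e')†})`. -/
noncomputable def PhiC (g10 g21 g20 : ℝ) (ρ : Matrix (Fin 3) (Fin 3) ℂ) :
    Matrix (Fin 3) (Fin 3) ℂ :=
  Matrix.of fun e e' : Fin 3 =>
    Matrix.trace ((![K0 g10 g21 g20, K1 g10 g21, K2 g20] e) * ρ *
      (![K0 g10 g21 g20, K1 g10 g21, K2 g20] e')ᴴ)

/-- For `γ₁₀ = 0`, the matrix unit `|0⟩⟨1|` lies in the kernel of the complementary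
channel `Φ̃_Γ^{(γ₁₀=0)}` but not in the kernel of `Φ_Γ^{(γ₁₀=0)}`; hence
`ker Φ̃_Γ ⊄ ker Φ_Γ`, so the channel cannot be antidegradable. -/
theorem qutrit_remad_g10_zero_not_antidegradable (g21 g20 : ℝ)
    (h21 : 0 ≤ g21) (h21' : g21 ≤ 1) (h20 : 0 ≤ g20) (h20' : g20 ≤ 1)
    (hsum : g21 + g20 ≤ 1) :
    PhiC 0 g21 g20 (Matrix.single 0 1 (1 : ℂ)) = 0 ∧
      Phi 0 g21 g20 (Matrix.single 0 1 (1 : ℂ)) ≠ 0 ∧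
      ¬ (∀ ρ : Matrix (Fin 3) (Fin 3) ℂ, PhiC 0 g21 g20 ρ = 0 → Phi 0 g21 g20 ρ = 0) := by
  have hz : Real.sqrt 0 = 0 := Real.sqrt_zero
  have ho : Real.sqrt (1 - 0 : ℝ) = 1 := by norm_num
  have h1 : PhiC 0 g21 g20 (Matrix.single 0 1 (1 : ℂ)) = 0 := by
    ext e e'
    fin_cases e <;> fin_cases e' <;>
      simp [PhiC, K0, K1, K2, Matrix.trace, Matrix.diag, Matrix.mul_apply,
        Matrix.conjTranspose_apply, Fin.sum_univ_three, Matrix.single,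
        Matrix.of_apply, Matrix.cons_val', Matrix.cons_val_zero, Matrix.cons_val_one,
        Matrix.head_cons, Matrix.empty_val', Matrix.cons_val_fin_one,
        Matrix.head_fin_const, Matrix.vecHead, Matrix.vecTail, Function.comp, hz, ho]
  have h2 : Phi 0 g21 g20 (Matrix.single 0 1 (1 : ℂ)) ≠ 0 := by
    intro h
    have h01 : Phi 0 g21 g20 (Matrix.single 0 1 (1 : ℂ)) 0 1 = 0 := by
      rw [h]; rfl
    rw [show Phi 0 g21 g20 (Matrix.single 0 1 (1 : ℂ)) 0 1 = 1 by
      simp [Phi, K0, K1, K2, Matrix.mul_apply, Matrix.conjTranspose_apply,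
        Fin.sum_univ_three, Matrix.single, Matrix.of_apply, Matrix.cons_val',
        Matrix.cons_val_zero, Matrix.cons_val_one, Matrix.head_cons, Matrix.empty_val',
        Matrix.cons_val_fin_one, Matrix.head_fin_const, Matrix.vecHead, Matrix.vecTail,
        Function.comp, Matrix.vecMul, dotProduct, hz, ho]] at h01
    exact one_ne_zero h01
  exact ⟨h1, h2, fun hall => h2 (hall _ h1)⟩
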